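/- Let γ₁,…,γₙ, λ_{n+1},…,λ_{2n} ∈ ℝ with γᵢ > 0 for all i, and λ_Ω ∈ ℝ³. The gradient of G(u) = Σ_{i=1}^n (γᵢ/2)uᵢ² + Σ_{i=1}^n λ_{n+i}uᵢ + λ_Ωᵀκ with respect to u vanishes if and only if, for every 1 ≤ i ≤ n, uᵢ = −γᵢ⁻¹{λ_{n+i} + λ_Ωᵀ A⁻¹ (mᵢ sᵢ × ζ′ᵢ(θᵢ))}. -/

import Mathlib

open Matrix Finset

/-- The hat map: `hatM w` is the `3 × 3` skew-symmetric matrix with `hatM w *ᵥ y = w ×₃ y`. -/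
noncomputable def hatM (w : Fin 3 → ℝ) : Matrix (Fin 3) (Fin 3) ℝ :=
  !![0, -w 2, w 1; w 2, 0, -w 0; -w 1, w 0, 0]

/-- The inertia tensor `𝕀 = diag(d₁, d₂, d₃)`. -/
noncomputable def inertiaM (d1 d2 d3 : ℝ) : Matrix (Fin 3) (Fin 3) ℝ :=
  Matrix.diagonal ![d1, d2, d3]

/-- `A = Σ_{i=0}^n mᵢ ŝᵢ² − 𝕀`, where `sᵢ = rΓ + ζᵢ(θᵢ)`; the static part (index `0`)
carries mass `m0`, rail curve `z0` and parameter `t0`. -/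
noncomputable def ballA {n : ℕ} (r d1 d2 d3 m0 t0 : ℝ) (Γ : Fin 3 → ℝ)
    (z0 : ℝ → Fin 3 → ℝ) (m : Fin n → ℝ) (z : Fin n → ℝ → Fin 3 → ℝ)
    (θ : Fin n → ℝ) : Matrix (Fin 3) (Fin 3) ℝ :=
  m0 • (hatM (r • Γ + z0 t0) * hatM (r • Γ + z0 t0))
    + (∑ i, m i • (hatM (r • Γ + z i (θ i)) * hatM (r • Γ + z i (θ i))))
    - inertiaM d1 d2 d3

/-- `κ = A⁻¹[Ω × 𝕀Ω + rΓ̃ × Γ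
      + Σ_{i=0}^n mᵢ sᵢ × (gΓ + Ω × (Ω × ζᵢ + 2θ̇ᵢζ′ᵢ) + θ̇ᵢ²ζ″ᵢ + uᵢζ′ᵢ)]`, the
angular-acceleration function of the rolling ball; `Γt` is `Γ̃`. -/
noncomputable def ballKappa {n : ℕ} (r g d1 d2 d3 m0 t0 td0 u0 : ℝ)
    (Γ Γt : Fin 3 → ℝ) (z0 : ℝ → Fin 3 → ℝ)
    (m : Fin n → ℝ) (z : Fin n → ℝ → Fin 3 → ℝ)
    (θ θd u : Fin n → ℝ) (Ω : Fin 3 → ℝ) : Fin 3 → ℝ :=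
  (ballA r d1 d2 d3 m0 t0 Γ z0 m z θ)⁻¹ *ᵥ
    (crossProduct Ω (inertiaM d1 d2 d3 *ᵥ Ω) + r • crossProduct Γt Γ
      + m0 • crossProduct (r • Γ + z0 t0)
          (g • Γ + crossProduct Ω (crossProduct Ω (z0 t0) + (2 * td0) • deriv z0 t0)
            + td0 ^ 2 • deriv (deriv z0) t0 + u0 • deriv z0 t0)
      + ∑ i, m i • crossProduct (r • Γ + z i (θ i))
          (g • Γ
            + crossProduct Ω (crossProduct Ω (z i (θ i)) + (2 * θd i) • deriv (z i) (θ i))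
            + θd i ^ 2 • deriv (deriv (z i)) (θ i) + u i • deriv (z i) (θ i)))

/-- The `u`-dependent part of the ball Hamiltonian:
`G(u) = Σ (γᵢ/2)uᵢ² + Σ λ_{n+i}uᵢ + λ_Ωᵀκ(u)`; `lam2 i = λ_{n+i}` and `lamΩ = λ_Ω`. -/
noncomputable def ballG {n : ℕ} (r g d1 d2 d3 m0 t0 td0 u0 : ℝ)
    (Γ Γt lamΩ : Fin 3 → ℝ) (z0 : ℝ → Fin 3 → ℝ)
    (m : Fin n → ℝ) (z : Fin n → ℝ → Fin 3 → ℝ)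
    (θ θd : Fin n → ℝ) (Ω : Fin 3 → ℝ) (γ lam2 : Fin n → ℝ) (u : Fin n → ℝ) : ℝ :=
  (∑ j, γ j / 2 * u j ^ 2) + (∑ j, lam2 j * u j)
    + lamΩ ⬝ᵥ ballKappa r g d1 d2 d3 m0 t0 td0 u0 Γ Γt z0 m z θ θd u Ω


noncomputable def ballPhi (lamΩ : Fin 3 → ℝ) (A : Matrix (Fin 3) (Fin 3) ℝ) :
    (Fin 3 → ℝ) →ₗ[ℝ] ℝ where
  toFun v := lamΩ ⬝ᵥ (A *ᵥ v)
  map_add' x y := by simp [Matrix.mulVec_add, dotProduct_add]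
  map_smul' c x := by simp [Matrix.mulVec_smul, dotProduct_smul]


theorem ballL_eq_zero_iff {n : ℕ} (c : Fin n → ℝ)
    (h : (∑ j, c j • (ContinuousLinearMap.proj j : (Fin n → ℝ) →L[ℝ] ℝ))
        = (0 : (Fin n → ℝ) →L[ℝ] ℝ)) (i : Fin n) : c i = 0 := by
  have := congrArg (fun L : (Fin n → ℝ) →L[ℝ] ℝ => L (Pi.single i 1)) h
  simpa [ContinuousLinearMap.sum_apply, Pi.single_apply, mul_ite,
    Finset.sum_ite_eq'] using this

theorem quadAux {n : ℕ} (γ b : Fin n → ℝ) (K0 : ℝ) (F : (Fin n → ℝ) → ℝ) (u : Fin n → ℝ)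
    (hF : ∀ v, F v = (∑ j, (γ j / 2 * v j ^ 2 + b j * v j)) + K0)
    (hγ : ∀ i, 0 < γ i) :
    fderiv ℝ F u = 0 ↔ ∀ i, u i = -(γ i)⁻¹ * b i := by
  have hd : ∀ j : Fin n, HasFDerivAt (fun v : Fin n → ℝ => γ j / 2 * v j ^ 2 + b j * v j)
      ((γ j * u j + b j) • (ContinuousLinearMap.proj j : (Fin n → ℝ) →L[ℝ] ℝ)) u := by
    intro j
    have h1 : HasDerivAt (fun x : ℝ => γ j / 2 * x ^ 2 + b j * x)
        (γ j * u j + b j) (u j) := by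
      have := ((hasDerivAt_pow 2 (u j)).const_mul (γ j / 2)).add
        ((hasDerivAt_id (u j)).const_mul (b j))
      have e : γ j * u j + b j = γ j / 2 * (↑2 * u j ^ 1) + b j * 1 := by push_cast; ring
      rw [e]; exact this
    exact h1.comp_hasFDerivAt u
      (ContinuousLinearMap.hasFDerivAt
        (ContinuousLinearMap.proj (R := ℝ) (φ := fun _ : Fin n => ℝ) j))
  have hFD : HasFDerivAt F
      (∑ j, (γ j * u j + b j) • (ContinuousLinearMap.proj j : (Fin n → ℝ) →L[ℝ] ℝ)) u := by
    have : F = fun v => (∑ j, (γ j / 2 * v j ^ 2 + b j * v j)) + K0 := funext hF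
    rw [this]
    exact (HasFDerivAt.fun_sum fun j _ => hd j).add_const K0
  rw [hFD.fderiv]
  constructor
  · intro h i
    have hi := ballL_eq_zero_iff _ h i
    have hne : γ i ≠ 0 := (hγ i).ne'
    field_simp
    linarith
  · intro h
    have hc : ∀ j, γ j * u j + b j = 0 := by
      intro j
      have hne : γ j ≠ 0 := (hγ j).ne'
      rw [h j]; field_simp; ring
    simp [hc]

/-- If `γᵢ > 0` for all `i`, the gradient of `G` with respect to `u`
vanishes iff, for every `i`, `uᵢ = −γᵢ⁻¹{λ_{n+i} + λ_Ωᵀ A⁻¹(mᵢ sᵢ × ζ′ᵢ)}`. -/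
theorem stmt13 {n : ℕ}
    (r g d1 d2 d3 m0 t0 td0 u0 : ℝ) (Γ Γt lamΩ : Fin 3 → ℝ)
    (z0 : ℝ → Fin 3 → ℝ) (m : Fin n → ℝ) (z : Fin n → ℝ → Fin 3 → ℝ)
    (θ θd u : Fin n → ℝ) (Ω : Fin 3 → ℝ) (γ lam2 : Fin n → ℝ)
    (hz0 : ∀ x y, z0 x = z0 y) (htd0 : td0 = 0) (hu0 : u0 = 0)
    (hz : ∀ i, ContDiff ℝ 3 (z i))
    (hA : IsUnit (ballA r d1 d2 d3 m0 t0 Γ z0 m z θ).det)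
    (hγ : ∀ i, 0 < γ i) :
    fderiv ℝ
        (ballG r g d1 d2 d3 m0 t0 td0 u0 Γ Γt lamΩ z0 m z θ θd Ω γ lam2) u = 0
      ↔ ∀ i : Fin n,
          u i = -(γ i)⁻¹ *
            (lam2 i
              + lamΩ ⬝ᵥ ((ballA r d1 d2 d3 m0 t0 Γ z0 m z θ)⁻¹ *ᵥ
                  (m i • crossProduct (r • Γ + z i (θ i)) (deriv (z i) (θ i))))) := by
  apply quadAux γ
      (fun i => lam2 i
        + lamΩ ⬝ᵥ ((ballA r d1 d2 d3 m0 t0 Γ z0 m z θ)⁻¹ *ᵥ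
            (m i • crossProduct (r • Γ + z i (θ i)) (deriv (z i) (θ i)))))
      (lamΩ ⬝ᵥ ballKappa r g d1 d2 d3 m0 t0 td0 u0 Γ Γt z0 m z θ θd (fun _ => 0) Ω)
      _ u _ hγ
  intro v
  have h : ∀ x, lamΩ ⬝ᵥ ((ballA r d1 d2 d3 m0 t0 Γ z0 m z θ)⁻¹ *ᵥ x)
      = ballPhi lamΩ (ballA r d1 d2 d3 m0 t0 Γ z0 m z θ)⁻¹ x := fun _ => rfl
  simp only [ballG, ballKappa, h, map_add, map_sum, _root_.map_smul, smul_add,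
    smul_comm (m _) (v _), smul_eq_mul, Finset.sum_add_distrib, zero_smul, add_zero,
    zero_mul, mul_zero, add_mul, mul_add]
  simp only [div_eq_mul_inv, mul_comm, mul_left_comm, mul_assoc]
  ring
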